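/- Let E be a finite-dimensional real inner product space, M ⊆ E a subspace, and R a norm on E that is decomposable with respect to (M, M⊥), i.e. R(u + v) = R(u) + R(v) for all u ∈ M, v ∈ M⊥. Let θ* ∈ M and θ̂ ∈ E satisfy R(θ̂) ≤ R(θ*), and set δ = θ̂ − θ*. Then R(Π_{M⊥}(δ)) ≤ R(Π_M(δ)), where Π_M and Π_{M⊥} denote the orthogonal projections onto M and M⊥. -/

import Mathlib

/-- A function `R : E → ℝ` is a norm: absolutely homogeneous, subadditive, nonnegative,
and definite. -/
def IsNormOn {E : Type*} [NormedAddCommGroup E] [InnerProductSpace ℝ E]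
    (R : E → ℝ) : Prop :=
  (∀ (a : ℝ) (x : E), R (a • x) = |a| * R x) ∧
  (∀ x y : E, R (x + y) ≤ R x + R y) ∧
  (∀ x : E, 0 ≤ R x) ∧
  (∀ x : E, R x = 0 → x = 0)

/-- If `R` is a norm on a finite-dimensional real inner product space `E`, decomposable
w.r.t. `(M, M⊥)`, `θ* ∈ M` and `R(θ̂) ≤ R(θ*)`, then with `δ = θ̂ − θ*` one has
`R(Π_{M⊥} δ) ≤ R(Π_M δ)`. -/
theorem stmt6 {E : Type*} [NormedAddCommGroup E] [InnerProductSpace ℝ E]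
    [FiniteDimensional ℝ E]
    (M : Submodule ℝ E) (R : E → ℝ) (hR : IsNormOn R)
    (hdecomp : ∀ u ∈ M, ∀ v ∈ Mᗮ, R (u + v) = R u + R v)
    (θstar θhat : E) (hθstar : θstar ∈ M) (hle : R θhat ≤ R θstar) :
    R (Submodule.orthogonalProjection Mᗮ (θhat - θstar) : E) ≤
      R (Submodule.orthogonalProjection M (θhat - θstar) : E) := by
  obtain ⟨hhom, htri, hnn, _⟩ := hR
  set δ := θhat - θstar
  set u := (Submodule.orthogonalProjection M δ : E)
  set v := (Submodule.orthogonalProjection Mᗮ δ : E)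
  have hsum : u + v = δ := Submodule.starProjection_add_starProjection_orthogonal (K := M) δ
  have hθhat : θhat = (θstar + u) + v := by
    rw [add_assoc, hsum]; simp [δ]
  have hmem : θstar + u ∈ M := M.add_mem hθstar (Submodule.orthogonalProjection M δ).2
  have hvmem : v ∈ Mᗮ := (Submodule.orthogonalProjection Mᗮ δ).2
  have h1 : R θhat = R (θstar + u) + R v := by
    rw [hθhat]; exact hdecomp _ hmem _ hvmem
  have hneg : R (-u) = R u := by
    have := hhom (-1) u; simpa using this
  have h2 : R θstar ≤ R (θstar + u) + R u := by
    have := htri (θstar + u) (-u)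
    simpa [hneg] using this
  linarith
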